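/- Every connected locally semicomplete digraph has a Hamilton directed path, and every strong locally semicomplete digraph on at least 2 vertices has a Hamilton directed cycle. -/

import Mathlib

/-- `A` is a locally semicomplete digraph: the out-neighbourhood and the
in-neighbourhood of each vertex induce semicomplete digraphs. -/
def LocallySemicomplete {V : Type*} (A : V → V → Prop) : Prop :=
  ∀ x u v : V, u ≠ v →
    (A x u → A x v → A u v ∨ A v u) ∧ (A u x → A v x → A u v ∨ A v u)

/-- The digraph `A` is connected (its underlying graph is connected). -/
def DigraphConnected {V : Type*} (A : V → V → Prop) : Prop :=
  ∀ u v : V, Relation.ReflTransGen (fun a b => A a b ∨ A b a) u v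

/-- The digraph `A` is strongly connected. -/
def DigraphStrong {V : Type*} (A : V → V → Prop) : Prop :=
  ∀ u v : V, Relation.ReflTransGen A u v

/-- `comp : V → Fin ℓ` is the acyclic ordering of the strong components of `A`:
its fibres are the strong components and no arc goes backwards. -/
def IsAcyclicOrdering {V : Type*} (A : V → V → Prop) {ℓ : ℕ} (comp : V → Fin ℓ) : Prop :=
  Function.Surjective comp ∧
    (∀ u v : V, comp u = comp v ↔
      (Relation.ReflTransGen A u v ∧ Relation.ReflTransGen A v u)) ∧
    (∀ u v : V, A u v → comp u ≤ comp v)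

/-- `l` lists the vertices of an `(S,T)`-path for the relation `R`: the first vertex is
in `S`, the last in `T`, and the internal vertices avoid `S ∪ T`. -/
def IsSTPathList {V : Type*} (R : V → V → Prop) (S T : Set V) (l : List V) : Prop :=
  l.Chain' R ∧ l.Nodup ∧
    (∃ a ∈ S, l.head? = some a) ∧ (∃ b ∈ T, l.getLast? = some b) ∧
    ∀ v ∈ (l.drop 1).dropLast, v ∉ S ∪ T

/-- The length `d(S,T)` of a shortest directed `(S,T)`-path in the digraph `A`. -/
noncomputable def distST {V : Type*} (A : V → V → Prop) (S T : Set V) : ℕ :=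
  sInf {m : ℕ | ∃ l : List V, IsSTPathList A S T l ∧ l.length = m + 1}

/-- The number of forward arcs of the oriented path listed by `l`. -/
noncomputable def listForward {V : Type*} (A : V → V → Prop) (l : List V) : ℕ :=
  (l.zip l.tail).countP fun p => @decide (A p.1 p.2) (Classical.propDecidable _)



open Relation List

section Basics
variable {V : Type*} {A : V → V → Prop}

def LocallySemicomplete' {V : Type*} (A : V → V → Prop) : Prop :=
  ∀ x u v : V, u ≠ v →
    (A x u → A x v → A u v ∨ A v u) ∧ (A u x → A v x → A u v ∨ A v u)

lemma LocallySemicomplete'.out (h : LocallySemicomplete' A) {x u v : V} (huv : u ≠ v)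
    (h1 : A x u) (h2 : A x v) : A u v ∨ A v u := (h x u v huv).1 h1 h2

lemma LocallySemicomplete'.inn (h : LocallySemicomplete' A) {x u v : V} (huv : u ≠ v)
    (h1 : A u x) (h2 : A v x) : A u v ∨ A v u := (h x u v huv).2 h1 h2

lemma LocallySemicomplete'.flip (h : LocallySemicomplete' A) : LocallySemicomplete' (flip A) := by
  intro x u v huv
  exact ⟨fun h1 h2 => ((h x u v huv).2 h1 h2).symm, fun h1 h2 => ((h x u v huv).1 h1 h2).symm⟩

lemma gl_cons {α : Type*} (a : α) {t : List α} (ht : t ≠ []) :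
    (a :: t).getLast? = t.getLast? := by
  cases t with
  | nil => exact absurd rfl ht
  | cons b t' => exact List.getLast?_cons_cons ..

/-- extract a nodup path from a walk -/
lemma pathify : ∀ (l : List V), l.Chain' A → l ≠ [] →
    ∃ m : List V, m.Chain' A ∧ m.Nodup ∧ m ≠ [] ∧ m.head? = l.head? ∧
      m.getLast? = l.getLast? ∧ ∀ x ∈ m, x ∈ l := by
  intro l
  induction l with
  | nil => intro _ h; exact absurd rfl h
  | cons a t ih =>
    intro hc _
    rcases eq_or_ne t [] with rfl | ht
    · exact ⟨[a], List.isChain_singleton a, by simp, by simp, rfl, rfl, by simp⟩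
    obtain ⟨m, hmc, hmn, hmne, hmh, hml, hmm⟩ := ih hc.tail ht
    by_cases ha : a ∈ m
    · obtain ⟨s, r, rfl⟩ := List.append_of_mem ha
      refine ⟨a :: r, ?_, ?_, by simp, rfl, ?_, ?_⟩
      · exact (List.isChain_append.mp hmc).2.1
      · exact (List.Nodup.sublist (List.sublist_append_right s _) hmn)
      · rw [gl_cons a ht, ← hml, List.getLast?_append_of_ne_nil _ (by simp)]
      · intro x hx
        exact List.mem_cons_of_mem a (hmm x (by simpa using Or.inr (by simpa using hx)))
    · refine ⟨a :: m, ?_, by simp [hmn, ha], by simp, rfl, ?_, ?_⟩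
      · refine hmc.cons ?_
        intro y hy
        rw [hmh] at hy
        exact hc.rel_head? hy
      · rw [gl_cons a hmne, hml, gl_cons a ht]
      · intro x hx
        rcases List.mem_cons.mp hx with rfl | hx
        · simp
        · exact List.mem_cons_of_mem a (hmm x hx)

/-- nodup path list realizing ReflTransGen -/
lemma rtg_path {u v : V} (h : Relation.ReflTransGen A u v) :
    ∃ m : List V, m.Chain' A ∧ m.Nodup ∧ m ≠ [] ∧ m.head? = some u ∧ m.getLast? = some v := by
  have : ∃ l : List V, l.Chain' A ∧ l ≠ [] ∧ l.head? = some u ∧ l.getLast? = some v := by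
    induction h with
    | refl => exact ⟨[u], List.isChain_singleton u, by simp, rfl, rfl⟩
    | @tail b c hab hbc ih =>
      obtain ⟨l, hc, hne, hh, hl⟩ := ih
      refine ⟨l ++ [c], ?_, by simp, by rwa [List.head?_append_of_ne_nil _ hne], by simp⟩
      refine List.isChain_append.mpr ?_
      refine ⟨hc, by simp, ?_⟩
      intro x hx y hy
      simp only [List.head?_cons, Option.mem_def, Option.some.injEq] at hy
      rw [hl] at hx
      simp only [Option.mem_def, Option.some.injEq] at hx
      subst hx; subst hy; exact hbc
  obtain ⟨l, hc, hne, hh, hl⟩ := this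
  obtain ⟨m, h1, h2, h3, h4, h5, _⟩ := pathify l hc hne
  exact ⟨m, h1, h2, h3, by rw [h4, hh], by rw [h5, hl]⟩

/-- every member of a chain reaches the last element -/
lemma chain'_rtg_last : ∀ (l : List V), l.Chain' A → ∀ b, l.getLast? = some b →
    ∀ x ∈ l, Relation.ReflTransGen A x b := by
  intro l
  induction l with
  | nil => intro _ b hb; simp at hb
  | cons a t ih =>
    intro hc b hb x hx
    cases t with
    | nil =>
      simp only [List.getLast?_singleton, Option.some.injEq] at hb
      simp only [List.mem_singleton] at hx
      subst hb; subst hx; rfl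
    | cons c t' =>
      rw [gl_cons a (by simp)] at hb
      rcases List.mem_cons.mp hx with rfl | hx
      · exact Relation.ReflTransGen.head hc.rel_head (ih hc.tail b hb c (by simp))
      · exact ih hc.tail b hb x hx

/-- every member is reached by the head -/
lemma chain'_rtg_head : ∀ (l : List V), l.Chain' A → ∀ b, l.head? = some b →
    ∀ x ∈ l, Relation.ReflTransGen A b x := by
  intro l hc b hb x hx
  have hrc : l.reverse.Chain' (flip A) := List.isChain_reverse.mpr hc
  have := chain'_rtg_last (A := flip A) l.reverse hrc b (by simpa using hb) x (by simpa using hx)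
  exact Relation.reflTransGen_swap.mp this

end Basics

section Cyc
variable {V : Type*} {A : V → V → Prop}

/-- `l` lists a directed cycle for `A`. -/
def IsCycL (A : V → V → Prop) (l : List V) : Prop :=
  2 ≤ l.length ∧ l.Nodup ∧ l.Chain' A ∧ ∀ x ∈ l.getLast?, ∀ y ∈ l.head?, A x y

lemma IsCycL.rotate_one {l : List V} (h : IsCycL A l) : IsCycL A (l.rotate 1) := by
  obtain ⟨hlen, hnd, hch, hcl⟩ := h
  cases l with
  | nil => simp at hlen
  | cons a t =>
    have ht : t ≠ [] := by rintro rfl; simp at hlen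
    have hrot : (a :: t).rotate 1 = t ++ [a] := by
      simpa using List.rotate_cons_succ t a 0
    rw [hrot]
    refine ⟨by simpa using hlen, ?_, ?_, ?_⟩
    · exact (List.perm_append_singleton a t).nodup_iff.mpr (by simpa using hnd)
    · refine List.isChain_append.mpr ?_
      refine ⟨hch.tail, by simp, ?_⟩
      intro x hx y hy
      simp only [List.head?_cons, Option.mem_def, Option.some.injEq] at hy
      subst hy
      exact hcl x (by rwa [gl_cons a ht]) a rfl
    · intro x hx y hy
      simp only [List.getLast?_concat, Option.mem_def, Option.some.injEq] at hx
      subst hx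
      rw [List.head?_append_of_ne_nil _ ht] at hy
      exact hch.rel_head? hy

lemma IsCycL.rotate {l : List V} (h : IsCycL A l) (n : ℕ) : IsCycL A (l.rotate n) := by
  induction n with
  | zero => simpa using h
  | succ k ih => rw [← List.rotate_rotate]; exact ih.rotate_one

lemma IsCycL.flip_reverse {l : List V} (h : IsCycL A l) : IsCycL (flip A) l.reverse := by
  obtain ⟨hlen, hnd, hch, hcl⟩ := h
  refine ⟨by simpa using hlen, by simpa using hnd, List.isChain_reverse.mpr hch, ?_⟩
  intro x hx y hy
  rw [List.getLast?_reverse] at hx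
  rw [List.head?_reverse] at hy
  exact hcl y hy x hx


lemma IsCycL.ne_nil {l : List V} (h : IsCycL A l) : l ≠ [] := by
  have := h.1; rintro rfl; simp at this

lemma IsCycL.to_head {l : List V} (h : IsCycL A l) {v : V} (hv : v ∈ l) :
    ∃ c, IsCycL A c ∧ c.head? = some v ∧ c.Perm l := by
  obtain ⟨s, t, rfl⟩ := List.append_of_mem hv
  refine ⟨(s ++ v :: t).rotate s.length, h.rotate _, ?_, List.rotate_perm _ _⟩
  rw [List.rotate_eq_drop_append_take (by simp)]
  simp

lemma IsCycL.to_last {l : List V} (h : IsCycL A l) {v : V} (hv : v ∈ l) :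
    ∃ c, IsCycL A c ∧ c.getLast? = some v ∧ c.Perm l := by
  obtain ⟨c, hc, hh, hp⟩ := h.to_head hv
  cases c with
  | nil => simp at hh
  | cons a t =>
    simp only [List.head?_cons, Option.some.injEq] at hh
    refine ⟨(a :: t).rotate 1, hc.rotate_one, ?_, (List.rotate_perm _ _).trans hp⟩
    have hrot : (a :: t).rotate 1 = t ++ [a] := by simpa using List.rotate_cons_succ t a 0
    rw [hrot, List.getLast?_concat, hh]

lemma insert_between {c : List V} {v : V} (hc : IsCycL A c) (hv : v ∉ c) (i : ℕ)
    (hi : i < c.length)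
    (h1 : A (c.get ⟨i, hi⟩) v)
    (h2 : A v (c.get ⟨(i + 1) % c.length, Nat.mod_lt _ (by omega)⟩)) :
    ∃ c', IsCycL A c' ∧ c'.length = c.length + 1 ∧ ∀ x ∈ c', x ∈ c ∨ x = v := by
  have hlen : 2 ≤ c.length := hc.1
  set n := c.length with hn
  set r := (i + 1) % n with hr
  have hn0 : 0 < n := by omega
  have hrn : r < n := Nat.mod_lt _ hn0
  have hcr : IsCycL A (c.rotate r) := hc.rotate r
  have hlenr : (c.rotate r).length = n := List.length_rotate ..
  have hner : c.rotate r ≠ [] := by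
    intro h; rw [h] at hlenr; simp at hlenr; omega
  have hhead : (c.rotate r).head? = some (c.get ⟨r, hrn⟩) := by
    rw [List.head?_rotate (show r < c.length by omega)]
    rw [List.getElem?_eq_getElem (show r < c.length by omega)]
    simp [List.get_eq_getElem]
  have hidx : (n - 1 + r) % n = i := by
    rcases Nat.lt_or_ge (i + 1) n with hlt | hge
    · have hr' : r = i + 1 := by rw [hr, Nat.mod_eq_of_lt hlt]
      have he : n - 1 + r = n + i := by omega
      rw [he, Nat.add_mod_left, Nat.mod_eq_of_lt hi]
    · have hie : i + 1 = n := by omega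
      have hr' : r = 0 := by rw [hr, hie, Nat.mod_self]
      rw [hr']
      have : n - 1 < n := by omega
      rw [Nat.add_zero, Nat.mod_eq_of_lt this]
      omega
  have hlast : (c.rotate r).getLast? = some (c.get ⟨i, hi⟩) := by
    rw [List.getLast?_eq_getElem?, hlenr]
    have hlt : n - 1 < (c.rotate r).length := by omega
    rw [List.getElem?_eq_getElem hlt]
    have hgr := List.get_rotate c r ⟨n - 1, hlt⟩
    simp only [List.get_eq_getElem] at hgr ⊢
    rw [hgr]
    have hq : (n - 1 + r) % c.length = i := by rw [← hn]; exact hidx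
    simp [hq]

  refine ⟨c.rotate r ++ [v], ⟨?_, ?_, ?_, ?_⟩, ?_, ?_⟩
  · simp; omega
  · rw [List.nodup_append]
    refine ⟨hcr.2.1, by simp, ?_⟩
    intro x hx
    simp only [List.mem_singleton]
    rintro _ rfl he; subst he
    exact hv (List.mem_rotate.mp hx)
  · refine List.isChain_append.mpr ?_
    refine ⟨hcr.2.2.1, by simp, ?_⟩
    intro x hx y hy
    rw [hlast] at hx
    simp only [List.head?_cons, Option.mem_def, Option.some.injEq] at hx hy
    subst hx; subst hy
    exact h1
  · intro x hx y hy
    rw [List.getLast?_concat] at hx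
    rw [List.head?_append_of_ne_nil _ hner, hhead] at hy
    simp only [Option.mem_def, Option.some.injEq] at hx hy
    subst hx; subst hy
    exact h2
  · simp [hlenr]
  · intro x hx
    rcases List.mem_append.mp hx with hx | hx
    · exact Or.inl (List.mem_rotate.mp hx)
    · simp only [List.mem_singleton] at hx; exact Or.inr hx


lemma cyc_insert (hls : LocallySemicomplete' A) {l : List V} {v : V}
    (hc : IsCycL A l) (hv : v ∉ l) {w b : V} (hw : w ∈ l) (hwv : A w v)
    (hb : b ∈ l) (hvb : A v b) :
    ∃ c', IsCycL A c' ∧ c'.length = l.length + 1 ∧ ∀ x ∈ c', x ∈ l ∨ x = v := by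
  obtain ⟨c, hcyc, hh, hperm⟩ := hc.to_head hw
  have hlenc : c.length = l.length := hperm.length_eq
  have hvc : v ∉ c := fun h => hv (hperm.mem_iff.mp h)
  suffices h : ∃ c', IsCycL A c' ∧ c'.length = c.length + 1 ∧ ∀ x ∈ c', x ∈ c ∨ x = v by
    obtain ⟨c', h1, h2, h3⟩ := h
    exact ⟨c', h1, by omega, fun x hx => (h3 x hx).imp (fun h => hperm.mem_iff.mp h) id⟩
  have hlen2 : 2 ≤ c.length := hcyc.1
  have hcne : c ≠ [] := hcyc.ne_nil
  have hw0 : c.get ⟨0, by omega⟩ = w := by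
    have h0 := hh
    rw [List.head?_eq_getElem?, List.getElem?_eq_getElem (show 0 < c.length by omega)] at h0
    simpa using h0
  have main : ∀ i (h : i < c.length),
      (∃ c', IsCycL A c' ∧ c'.length = c.length + 1 ∧ ∀ x ∈ c', x ∈ c ∨ x = v) ∨
        A (c.get ⟨i, h⟩) v := by
    intro i
    induction i with
    | zero => intro h; right; rw [show (⟨0, h⟩ : Fin c.length) = ⟨0, by omega⟩ from rfl, hw0]; exact hwv
    | succ k ih =>
      intro h
      rcases ih (by omega) with done | hk
      · exact Or.inl done
      have harc : A (c.get ⟨k, by omega⟩) (c.get ⟨k + 1, h⟩) :=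
        List.isChain_iff_getElem.mp hcyc.2.2.1 k (by omega)
      have hne : v ≠ c.get ⟨k + 1, h⟩ := fun he => hvc (he ▸ List.get_mem c _)
      rcases LocallySemicomplete'.out hls hne hk harc with hvk | hkv
      · left
        refine insert_between hcyc hvc k (by omega) hk ?_
        have hmod : (k + 1) % c.length = k + 1 := Nat.mod_eq_of_lt h
        have : (⟨(k + 1) % c.length, Nat.mod_lt _ (by omega)⟩ : Fin c.length) = ⟨k + 1, h⟩ :=
          Fin.ext (by simpa using hmod)
        rw [this]
        exact hvk
      · exact Or.inr hkv
  obtain ⟨⟨j, hj⟩, hbj⟩ := List.mem_iff_get.mp (hperm.mem_iff.mpr hb)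
  cases j with
  | zero =>
    rcases main (c.length - 1) (by omega) with done | hlastv
    · exact done
    refine insert_between hcyc hvc (c.length - 1) (by omega) hlastv ?_
    have hmod : (c.length - 1 + 1) % c.length = 0 := by
      rw [show c.length - 1 + 1 = c.length by omega, Nat.mod_self]
    have : (⟨(c.length - 1 + 1) % c.length, Nat.mod_lt _ (by omega)⟩ : Fin c.length)
        = ⟨0, hj⟩ := Fin.ext (by simpa using hmod)
    rw [this, hbj]
    exact hvb
  | succ m =>
    rcases main m (by omega) with done | hmv
    · exact done
    refine insert_between hcyc hvc m (by omega) hmv ?_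
    have hmod : (m + 1) % c.length = m + 1 := Nat.mod_eq_of_lt hj
    have : (⟨(m + 1) % c.length, Nat.mod_lt _ (by omega)⟩ : Fin c.length)
        = ⟨m + 1, hj⟩ := Fin.ext (by simpa using hmod)
    rw [this, hbj]
    exact hvb

lemma dominate_forward (hls : LocallySemicomplete' A) {l : List V} {v : V}
    (hc : IsCycL A l) (hv : v ∉ l) {w : V} (hw : w ∈ l) (hwv : A w v)
    (hnone : ∀ z ∈ l, ¬ A v z) : ∀ y ∈ l, A y v := by
  obtain ⟨c, hcyc, hh, hperm⟩ := hc.to_head hw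
  have hvc : v ∉ c := fun h => hv (hperm.mem_iff.mp h)
  have hlen2 : 2 ≤ c.length := hcyc.1
  have hw0 : c.get ⟨0, by omega⟩ = w := by
    have h0 := hh
    rw [List.head?_eq_getElem?, List.getElem?_eq_getElem (show 0 < c.length by omega)] at h0
    simpa using h0
  have main : ∀ i (h : i < c.length), A (c.get ⟨i, h⟩) v := by
    intro i
    induction i with
    | zero => intro h; rw [show (⟨0, h⟩ : Fin c.length) = ⟨0, by omega⟩ from rfl, hw0]; exact hwv
    | succ k ih =>
      intro h
      have hk := ih (by omega)
      have harc : A (c.get ⟨k, by omega⟩) (c.get ⟨k + 1, h⟩) :=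
        List.isChain_iff_getElem.mp hcyc.2.2.1 k (by omega)
      have hne : v ≠ c.get ⟨k + 1, h⟩ := fun he => hvc (he ▸ List.get_mem c _)
      rcases LocallySemicomplete'.out hls hne hk harc with hvk | hkv
      · exact absurd hvk (hnone _ (hperm.mem_iff.mp (List.get_mem c _)))
      · exact hkv
  intro y hy
  obtain ⟨⟨j, hj⟩, hyj⟩ := List.mem_iff_get.mp (hperm.mem_iff.mpr hy)
  rw [← hyj]
  exact main j hj

lemma dominate_back (hls : LocallySemicomplete' A) {l : List V} {v : V}
    (hc : IsCycL A l) (hv : v ∉ l) {w : V} (hw : w ∈ l) (hwv : A v w)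
    (hnone : ∀ z ∈ l, ¬ A z v) : ∀ y ∈ l, A v y := by
  intro y hy
  exact dominate_forward hls.flip hc.flip_reverse (by simpa using hv)
    (by simpa using hw) hwv (fun z hz => hnone z (by simpa using hz)) y (by simpa using hy)


/-- from a path ending outside `S` but meeting `S`, extract a final segment leaving `S` once -/
lemma exit_path (S : V → Prop) : ∀ (p : List V), p.Chain' A → p.Nodup →
    ∀ v, p.getLast? = some v → ¬ S v → (∃ x ∈ p, S x) →
    ∃ q : List V, q.Chain' A ∧ q.Nodup ∧ (∃ b, S b ∧ q.head? = some b) ∧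
      q.getLast? = some v ∧ ∀ x ∈ q.tail, ¬ S x := by
  intro p
  induction p with
  | nil => intro _ _ v hv; simp at hv
  | cons x rest ih =>
    intro hc hn v hv hvS hex
    by_cases hS : ∃ y ∈ rest, S y
    · have hrne : rest ≠ [] := by
        obtain ⟨y, hy, _⟩ := hS
        exact List.ne_nil_of_mem hy
      exact ih hc.tail hn.of_cons v (by rwa [gl_cons x hrne] at hv) hvS hS
    · push_neg at hS
      have hxS : S x := by
        obtain ⟨w, hw, hwS⟩ := hex
        rcases List.mem_cons.mp hw with rfl | hw
        · exact hwS
        · exact absurd hwS (hS w hw)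
      exact ⟨x :: rest, hc, hn, ⟨x, hxS, rfl⟩, hv, fun y hy => hS y hy⟩

theorem hamCycL [Fintype V] (hls : LocallySemicomplete' A)
    (hstrong : ∀ u v : V, Relation.ReflTransGen A u v)
    (hcard : 2 ≤ Fintype.card V) :
    ∃ c : List V, IsCycL A c ∧ c.length = Fintype.card V := by
  classical
  -- an arc between two distinct vertices
  obtain ⟨u, v, huv⟩ := Fintype.exists_pair_of_one_lt_card (α := V) (by omega)
  obtain ⟨p0, hp0c, hp0n, hp0ne, hp0h, hp0l⟩ := rtg_path (hstrong u v)
  have harc : ∃ x y : V, x ≠ y ∧ A x y := by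
    cases p0 with
    | nil => exact absurd rfl hp0ne
    | cons a t =>
      cases t with
      | nil =>
        simp only [List.head?_cons, Option.some.injEq] at hp0h
        simp only [List.getLast?_singleton, Option.some.injEq] at hp0l
        exact absurd (hp0h ▸ hp0l ▸ rfl : u = v) huv
      | cons b t' =>
        refine ⟨a, b, ?_, hp0c.rel_head⟩
        intro he
        subst he
        simp at hp0n
  obtain ⟨x, y, hxy, hAxy⟩ := harc
  -- an initial cycle
  obtain ⟨q0, hq0c, hq0n, hq0ne, hq0h, hq0l⟩ := rtg_path (hstrong y x)
  have hq0cyc : IsCycL A q0 := by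
    refine ⟨?_, hq0n, hq0c, ?_⟩
    · rcases q0 with _ | ⟨a, _ | ⟨b, t⟩⟩
      · exact absurd rfl hq0ne
      · simp only [List.head?_cons, Option.some.injEq] at hq0h
        simp only [List.getLast?_singleton, Option.some.injEq] at hq0l
        exact absurd (hq0h ▸ hq0l ▸ rfl : y = x) (Ne.symm hxy)
      · simp
    · intro a ha b hb
      rw [hq0l] at ha
      rw [hq0h] at hb
      simp only [Option.mem_def, Option.some.injEq] at ha hb
      subst ha; subst hb
      exact hAxy
  -- the longest cycle
  set Sl : Set ℕ := {m | ∃ c : List V, IsCycL A c ∧ c.length = m} with hSl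
  have hSne : Sl.Nonempty := ⟨q0.length, q0, hq0cyc, rfl⟩
  have hSbdd : BddAbove Sl := by
    refine ⟨Fintype.card V, ?_⟩
    rintro m ⟨c, hc, rfl⟩
    exact hc.2.1.length_le_card
  have hM : sSup Sl ∈ Sl := Nat.sSup_mem hSne hSbdd
  obtain ⟨c, hc, hclen⟩ := hM
  by_cases hall : ∀ z : V, z ∈ c
  · refine ⟨c, hc, le_antisymm (hc.2.1.length_le_card) ?_⟩
    calc Fintype.card V = (Finset.univ : Finset V).card := rfl
      _ ≤ c.toFinset.card := Finset.card_le_card (fun z _ => List.mem_toFinset.mpr (hall z))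
      _ ≤ c.length := c.toFinset_card_le
  exfalso
  push_neg at hall
  obtain ⟨w, hw⟩ := hall
  have hcne : c ≠ [] := hc.ne_nil
  obtain ⟨u0, hu0⟩ : ∃ u0, c.head? = some u0 := by
    cases c with
    | nil => exact absurd rfl hcne
    | cons a t => exact ⟨a, rfl⟩
  have hu0c : u0 ∈ c := List.mem_of_mem_head? hu0
  -- escape path from the cycle to w
  obtain ⟨p1, hp1c, hp1n, _, hp1h, hp1l⟩ := rtg_path (hstrong u0 w)
  obtain ⟨q1, hq1c, hq1n, ⟨b1, hb1S, hq1h⟩, hq1l, hq1tail⟩ :=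
    exit_path (fun z => z ∈ c) p1 hp1c hp1n w (by rw [hp1l]) hw
      ⟨u0, List.mem_of_mem_head? (by rw [hp1h]; rfl), hu0c⟩
  -- approach path from w back to the cycle (via the flipped digraph)
  obtain ⟨p2, hp2c, hp2n, _, hp2h, hp2l⟩ := rtg_path (hstrong w u0)
  obtain ⟨q2, hq2c, hq2n, ⟨b2, hb2S, hq2h⟩, hq2l, hq2tail⟩ :=
    exit_path (A := flip A) (fun z => z ∈ c) p2.reverse (List.isChain_reverse.mpr hp2c)
      (by simpa using hp2n) w (by simpa using hp2h) hw
      ⟨u0, by simpa using List.mem_of_mem_getLast? (by rw [hp2l]; rfl), hu0c⟩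
  have hrc : q2.reverse.Chain' A := by
    refine List.isChain_reverse.mpr ?_
    exact hq2c
  have hrn : q2.reverse.Nodup := by simpa using hq2n
  have hrh : q2.reverse.head? = some w := by rw [List.head?_reverse]; exact hq2l
  have hrl : q2.reverse.getLast? = some b2 := by rw [List.getLast?_reverse]; exact hq2h
  have hrdrop : ∀ x ∈ q2.reverse.dropLast, x ∉ c := by
    intro z hz
    cases q2 with
    | nil => simp at hz
    | cons a t =>
      have : (a :: t).reverse.dropLast = t.reverse := by simp [List.reverse_cons]
      rw [this] at hz
      exact hq2tail z (by simpa using hz)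
  -- names for the pieces
  obtain ⟨a1, I, rfl⟩ : ∃ a1 I, q1 = a1 :: I := by
    cases q1 with
    | nil => simp at hq1h
    | cons a t => exact ⟨a, t, rfl⟩
  have ha1 : b1 = a1 := by simpa using hq1h.symm
  subst ha1
  have hIne : I ≠ [] := by
    rintro rfl
    simp only [List.getLast?_singleton, Option.some.injEq] at hq1l
    exact hw (hq1l ▸ hb1S)
  have hIl : I.getLast? = some w := by rwa [gl_cons b1 hIne] at hq1l
  obtain ⟨w', rt, hr⟩ : ∃ w' rt, q2.reverse = w' :: rt := by
    cases hr : q2.reverse with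
    | nil => rw [hr] at hrh; simp at hrh
    | cons a t => exact ⟨a, t, rfl⟩
  rw [hr] at hrc hrn hrh hrl hrdrop
  have hw' : w = w' := by simpa using hrh.symm
  subst hw'
  have hrtne : rt ≠ [] := by
    rintro rfl
    simp only [List.getLast?_singleton, Option.some.injEq] at hrl
    exact hw (hrl ▸ hb2S)
  have hrtl : rt.getLast? = some b2 := by rwa [gl_cons w hrtne] at hrl
  set K : List V := rt.dropLast with hKdef
  have hKrt : K ++ [b2] = rt := List.dropLast_append_getLast? b2 hrtl
  have hKnotc : ∀ x ∈ K, x ∉ c := by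
    intro z hz
    refine hrdrop z ?_
    obtain ⟨y, ys, rfl⟩ : ∃ y ys, rt = y :: ys := by
      cases rt with
      | nil => exact absurd rfl hrtne
      | cons a t => exact ⟨a, t, rfl⟩
    rw [List.dropLast_cons₂]
    exact List.mem_cons_of_mem w hz
  have hrtc : rt.Chain' A := hrc.tail
  have hKc : K.Chain' A := (List.isChain_append.mp (hKrt ▸ hrtc)).1
  set middle : List V := I ++ K with hmiddef
  have hmidne : middle ≠ [] := by
    rw [hmiddef]
    intro h
    exact hIne (List.append_eq_nil_iff.mp h).1
  have hmidc : middle.Chain' A := by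
    rw [hmiddef]; refine List.isChain_append.mpr ?_
    refine ⟨hq1c.tail, hKc, ?_⟩
    intro x hx y hy
    rw [hIl] at hx
    simp only [Option.mem_def, Option.some.injEq] at hx
    subst hx
    refine hrc.rel_head? (y := y) ?_
    rw [← hKrt, List.head?_append]
    simp only [Option.mem_def] at hy
    rw [hy]
    rfl
  obtain ⟨m, hmc, hmn, hmne, hmh, hml, hmm⟩ := pathify middle hmidc hmidne
  have hmnotc : ∀ x ∈ m, x ∉ c := by
    intro z hz
    rcases List.mem_append.mp (hmm z hz) with hz' | hz'
    · exact hq1tail z hz'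
    · exact hKnotc z hz'
  have hb1m : ∀ y ∈ m.head?, A b1 y := by
    intro y hy
    rw [hmh, hmiddef, List.head?_append_of_ne_nil _ hIne] at hy
    exact hq1c.rel_head? hy
  obtain ⟨d, hd⟩ : ∃ d, m.getLast? = some d :=
    ⟨m.getLast hmne, List.getLast?_eq_getLast hmne⟩
  have hdm : d ∈ m := List.mem_of_mem_getLast? (by rw [hd]; rfl)
  have hdnotc : d ∉ c := hmnotc d hdm
  have hdb2 : A d b2 := by
    by_cases hK : K = []
    · have hmid : middle = I := by rw [hmiddef, hK, List.append_nil]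
      have : I.getLast? = some d := by rw [← hmid, ← hml, hd]
      have hdw : d = w := by rw [hIl] at this; simpa using this.symm
      subst hdw
      have hrt2 : rt = [b2] := by rw [← hKrt, hK]; rfl
      refine hrc.rel_head? ?_
      rw [hrt2]
      rfl
    · have hKl : K.getLast? = some d := by
        have : middle.getLast? = K.getLast? := by
          rw [hmiddef, List.getLast?_append_of_ne_nil _ hK]
        rw [← this, ← hml, hd]
      have := (List.isChain_append.mp (hKrt ▸ hrtc)).2.2
      exact this d (by rw [hKl]; rfl) b2 (by rfl)
  have hnone : ∀ z ∈ c, ¬ A z d := by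
    intro z hz hzd
    obtain ⟨c', hcyc', hlen', _⟩ := cyc_insert hls hc hdnotc hz hzd hb2S hdb2
    have : c'.length ≤ sSup Sl := le_csSup hSbdd ⟨c', hcyc', rfl⟩
    omega
  have hdom : ∀ y ∈ c, A d y := dominate_back hls hc hdnotc hb2S hdb2 hnone
  obtain ⟨c0, hc0cyc, hc0l, hc0p⟩ := hc.to_last hb1S
  have hc0len : c0.length = c.length := hc0p.length_eq
  have hc0ne : c0 ≠ [] := hc0cyc.ne_nil
  have hnewcyc : IsCycL A (c0 ++ m) := by
    refine ⟨?_, ?_, ?_, ?_⟩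
    · have := hc0cyc.1
      simp only [List.length_append]
      omega
    · rw [List.nodup_append]
      refine ⟨hc0cyc.2.1, hmn, ?_⟩
      intro z hz
      exact fun _ hzm hzb => by subst hzb; exact (hmnotc _ hzm) (hc0p.mem_iff.mp hz)
    · refine List.isChain_append.mpr ?_
      refine ⟨hc0cyc.2.2.1, hmc, ?_⟩
      intro x hx y hy
      rw [hc0l] at hx
      simp only [Option.mem_def, Option.some.injEq] at hx
      subst hx
      exact hb1m y hy
    · intro x hx y hy
      rw [List.getLast?_append_of_ne_nil _ hmne, hd] at hx
      rw [List.head?_append_of_ne_nil _ hc0ne] at hy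
      simp only [Option.mem_def, Option.some.injEq] at hx
      subst hx
      exact hdom y (hc0p.mem_iff.mp (List.mem_of_mem_head? hy))
  have hmlen : 1 ≤ m.length := by
    cases m with
    | nil => exact absurd rfl hmne
    | cons a t => simp
  have : (c0 ++ m).length ≤ sSup Sl := le_csSup hSbdd ⟨c0 ++ m, hnewcyc, rfl⟩
  rw [List.length_append, hc0len] at this
  omega

end Cyc




section Path
variable {V : Type*} {A : V → V → Prop}
open Relation

lemma L1 (hls : LocallySemicomplete' A) :
    ∀ {u w : V}, ReflTransGen A u w → ∀ {z : V}, A z w →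
      ReflTransGen A u z ∨ ReflTransGen A z u := by
  intro u w h
  induction h with
  | refl => intro z hz; exact Or.inr (ReflTransGen.single hz)
  | @tail b c hub hbc ih =>
    intro z hz
    by_cases hzb : z = b
    · subst hzb; exact Or.inl hub
    · rcases hls.inn hzb hz hbc with hzb' | hbz'
      · exact ih hzb'
      · exact Or.inl (hub.tail hbz')

lemma L2 (hls : LocallySemicomplete' A) :
    ∀ {u w : V}, ReflTransGen A w u → ∀ {z : V}, A w z →
      ReflTransGen A u z ∨ ReflTransGen A z u := by
  intro u w h z hz
  have h' : ReflTransGen (flip A) u w := reflTransGen_swap.mpr h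
  have hz' : flip A z w := hz
  rcases L1 hls.flip h' hz' with h1 | h1
  · exact Or.inr (reflTransGen_swap.mp h1)
  · exact Or.inl (reflTransGen_swap.mp h1)

lemma comparable (hls : LocallySemicomplete' A)
    (hconn : ∀ u v : V, ReflTransGen (fun a b => A a b ∨ A b a) u v) :
    ∀ u v : V, ReflTransGen A u v ∨ ReflTransGen A v u := by
  intro u v
  have h := hconn u v
  induction h with
  | refl => exact Or.inl ReflTransGen.refl
  | @tail b c hub hbc ih =>
    rcases ih with hub' | hbu'
    · rcases hbc with hbc | hcb
      · exact Or.inl (hub'.tail hbc)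
      · exact L1 hls hub' hcb
    · rcases hbc with hbc | hcb
      · exact L2 hls hbu' hbc
      · exact Or.inr ((ReflTransGen.single hcb).trans hbu')

lemma exists_top_list :
    ∀ (l : List V), (∀ u v : V, ReflTransGen A u v ∨ ReflTransGen A v u) →
      l ≠ [] → ∃ m ∈ l, ∀ y ∈ l, ReflTransGen A y m := by
  intro l
  induction l with
  | nil => intro _ h; exact absurd rfl h
  | cons a t ih =>
    intro hcomp _
    rcases eq_or_ne t [] with rfl | ht
    · refine ⟨a, by simp, ?_⟩
      intro y hy
      rw [List.mem_singleton] at hy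
      subst hy
      rfl
    obtain ⟨m, hm, hmax⟩ := ih hcomp ht
    rcases hcomp a m with ham | hma
    · refine ⟨m, List.mem_cons_of_mem a hm, ?_⟩
      intro y hy
      rcases List.mem_cons.mp hy with rfl | hy
      · exact ham
      · exact hmax y hy
    · refine ⟨a, by simp, ?_⟩
      intro y hy
      rcases List.mem_cons.mp hy with rfl | hy
      · rfl
      · exact (hmax y hy).trans hma

lemma exists_top [Fintype V] [Nonempty V]
    (hcomp : ∀ u v : V, ReflTransGen A u v ∨ ReflTransGen A v u) :
    ∃ m : V, ∀ y : V, ReflTransGen A y m := by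
  have hne : (Finset.univ : Finset V).toList ≠ [] := by
    rw [Ne, Finset.toList_eq_nil]
    exact Finset.univ_nonempty.ne_empty
  obtain ⟨m, _, hmax⟩ := exists_top_list (Finset.univ : Finset V).toList hcomp hne
  exact ⟨m, fun y => hmax y (by simp [Finset.mem_toList])⟩

lemma rtg_restrict {T : Set V} {u v : V} (h : ReflTransGen A u v)
    (hmid : ∀ w, ReflTransGen A u w → ReflTransGen A w v → w ∈ T) :
    ∀ (hu : u ∈ T) (hv : v ∈ T),
      ReflTransGen (fun a b : T => A (a : V) (b : V)) ⟨u, hu⟩ ⟨v, hv⟩ := by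
  have main : ∀ (a : V) (ha : ReflTransGen A a v), ReflTransGen A u a →
      ∀ (haT : a ∈ T) (hv : v ∈ T),
        ReflTransGen (fun a b : T => A (a : V) (b : V)) ⟨a, haT⟩ ⟨v, hv⟩ := by
    intro a ha
    induction ha using ReflTransGen.head_induction_on with
    | refl => intro _ _ _; rfl
    | @head a c h' hcv ih =>
      intro hua haT hv
      have huc : ReflTransGen A u c := hua.tail h'
      have hcT : c ∈ T := hmid c huc hcv
      exact ReflTransGen.head (show A ((⟨a, haT⟩ : T) : V) ((⟨c, hcT⟩ : T) : V) from h')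
        (ih huc hcT hv)
  intro hu hv
  exact main u h ReflTransGen.refl hu hv

end Path

section PathMain
open Relation
universe u

lemma lsc_subtype {V : Type*} {A : V → V → Prop} (hls : LocallySemicomplete' A) (T : Set V) :
    LocallySemicomplete' (fun a b : T => A (a : V) (b : V)) := by
  intro x u v huv
  have h : (u : V) ≠ (v : V) := fun he => huv (Subtype.ext he)
  exact ⟨fun h1 h2 => hls.out h h1 h2, fun h1 h2 => hls.inn h h1 h2⟩

theorem hamPathL : ∀ (n : ℕ) {V : Type u} [Fintype V] (A : V → V → Prop),
    Fintype.card V ≤ n → LocallySemicomplete' A →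
    (∀ u v : V, ReflTransGen (fun a b => A a b ∨ A b a) u v) →
    ∃ p : List V, p.Chain' A ∧ p.Nodup ∧ ∀ x : V, x ∈ p := by
  intro n
  induction n with
  | zero =>
    intro V _ A hcard _ _
    have : IsEmpty V := Fintype.card_eq_zero_iff.mp (by omega)
    exact ⟨[], List.IsChain.nil, by simp, fun x => (this.false x).elim⟩
  | succ n ih =>
    intro V instV A hcard hls hconn
    classical
    rcases isEmpty_or_nonempty V with hV | hV
    · exact ⟨[], List.IsChain.nil, by simp, fun x => (hV.false x).elim⟩
    have hcomp := comparable hls hconn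
    obtain ⟨x0, hx0⟩ := exists_top hcomp
    set T : Set V := {y | ReflTransGen A x0 y} with hTdef
    have hx0T : x0 ∈ T := ReflTransGen.refl
    have hcross : ∀ t z, t ∈ T → z ∉ T → ¬ A t z := fun t z ht hz hA => hz (ht.tail hA)
    by_cases hTall : ∀ y, y ∈ T
    · have hstrong : ∀ a b : V, ReflTransGen A a b := fun a b => (hx0 a).trans (hTall b)
      rcases Nat.lt_or_ge (Fintype.card V) 2 with h2 | h2
      · have h1 : Fintype.card V = 1 := by
          have := Fintype.card_pos (α := V); omega
        obtain ⟨z, hz⟩ := Fintype.card_eq_one_iff.mp h1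
        exact ⟨[z], List.isChain_singleton z, List.nodup_singleton z,
          fun x => by rw [hz x]; simp⟩
      · obtain ⟨c, hcyc, hclen⟩ := hamCycL hls hstrong h2
        refine ⟨c, hcyc.2.2.1, hcyc.2.1, ?_⟩
        have huniv : c.toFinset = Finset.univ :=
          Finset.eq_univ_of_card _ (by rw [List.toFinset_card_of_nodup hcyc.2.1, hclen])
        intro x
        rw [← List.mem_toFinset, huniv]
        exact Finset.mem_univ x
    · push_neg at hTall
      obtain ⟨v0, hv0⟩ := hTall
      have hcardW : Fintype.card {y : V // y ∉ T} < Fintype.card V :=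
        Fintype.card_subtype_lt (x := x0) (not_not_intro hx0T)
      set A' : {y : V // y ∉ T} → {y : V // y ∉ T} → Prop := fun a b => A a.1 b.1 with hA'def
      have hls' : LocallySemicomplete' A' := lsc_subtype hls {y : V | y ∉ T}
      have hconnW : ∀ u v : {y : V // y ∉ T},
          ReflTransGen (fun a b => A' a b ∨ A' b a) u v := by
        intro uu vv
        rcases hcomp uu.1 vv.1 with h | h
        · have hres := rtg_restrict (T := {y : V | y ∉ T}) h
            (fun w _ h2 hwT => vv.2 (hwT.trans h2)) uu.2 vv.2
          exact ReflTransGen.mono (fun a b hab => Or.inl hab) _ _ hres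
        · have hres := rtg_restrict (T := {y : V | y ∉ T}) h
            (fun w _ h2 hwT => uu.2 (hwT.trans h2)) vv.2 uu.2
          have hsym := ReflTransGen.mono (fun a b hab => (Or.inl hab : A' a b ∨ A' b a)) _ _ hres
          haveI : Std.Symm (fun a b => A' a b ∨ A' b a) := ⟨fun a b hab => hab.symm⟩; exact Std.Symm.symm _ _ hsym
      have hle : Fintype.card {y : V // y ∉ T} ≤ n :=
        Nat.le_of_lt_succ (lt_of_lt_of_le hcardW hcard)
      obtain ⟨p', hp'c, hp'n, hp'all⟩ := ih A' hle hls' hconnW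
      set pm : List V := p'.map Subtype.val with hpmdef
      have hpmc : pm.Chain' A := (List.isChain_map _).mpr hp'c
      have hpmn : pm.Nodup := hp'n.map Subtype.val_injective
      have hpm_mem : ∀ x : V, x ∈ pm ↔ x ∉ T := by
        intro x
        constructor
        · intro hx
          obtain ⟨w1, _, rfl⟩ := List.mem_map.mp hx
          exact w1.2
        · intro hx
          exact List.mem_map.mpr ⟨⟨x, hx⟩, hp'all _, rfl⟩
      have hpmne : pm ≠ [] := by
        intro h
        have := (hpm_mem v0).mpr hv0
        rw [h] at this
        simp at this
      obtain ⟨uu, huu⟩ : ∃ z, pm.getLast? = some z :=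
        ⟨pm.getLast hpmne, List.getLast?_eq_getLast hpmne⟩
      have huuT : uu ∉ T := (hpm_mem uu).mp (List.mem_of_mem_getLast? (by rw [huu]; rfl))
      have hreach : ∀ y : V, y ∉ T → ReflTransGen A y uu := by
        intro y hy
        exact chain'_rtg_last pm hpmc uu huu y ((hpm_mem y).mpr hy)
      have hcrossex : ∃ z t, z ∉ T ∧ t ∈ T ∧ A z t := by
        have main : ∀ c, ReflTransGen (fun a b => A a b ∨ A b a) v0 c → c ∈ T →
            ∃ z t, z ∉ T ∧ t ∈ T ∧ A z t := by
          intro c hc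
          induction hc with
          | refl => intro h; exact absurd h hv0
          | @tail b c hvb hbc ih2 =>
            intro hcT
            by_cases hbT : b ∈ T
            · exact ih2 hbT
            · rcases hbc with hbc | hcb
              · exact ⟨b, c, hbT, hcT, hbc⟩
              · exact absurd hcb (hcross c b hcT hbT)
        exact main x0 (hconn v0 x0) hx0T
      obtain ⟨z0, t0, hz0, ht0, hzt⟩ := hcrossex
      have hclosure : ∀ w, ReflTransGen A z0 w → w ∉ T → ∃ t, t ∈ T ∧ A w t := by
        intro w hw
        induction hw with
        | refl => intro _; exact ⟨t0, ht0, hzt⟩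
        | @tail b c hzb hbc ih2 =>
          intro hcT
          have hbT : b ∉ T := fun hbT => (hcross b c hbT hcT) hbc
          obtain ⟨t', ht', hbt'⟩ := ih2 hbT
          have hct : c ≠ t' := by rintro rfl; exact hcT ht'
          rcases hls.out hct hbc hbt' with h1 | h1
          · exact ⟨t', ht', h1⟩
          · exact absurd h1 (hcross t' c ht' hcT)
      obtain ⟨t1, ht1T, hut1⟩ := hclosure uu (hreach z0 hz0) huuT
      have hlsT : LocallySemicomplete' (fun a b : T => A (a : V) (b : V)) :=
        lsc_subtype hls T
      have hstrongT : ∀ u v : T, ReflTransGen (fun a b : T => A (a : V) (b : V)) u v := by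
        intro u v
        have h : ReflTransGen A u.1 v.1 := (hx0 u.1).trans v.2
        exact rtg_restrict (T := T) h (fun w h1 _ => u.2.trans h1) u.2 v.2
      obtain ⟨q, hqc, hqn, hqh, hqall⟩ : ∃ q : List V, q.Chain' A ∧ q.Nodup ∧
          q.head? = some t1 ∧ ∀ x : V, x ∈ q ↔ x ∈ T := by
        rcases Nat.lt_or_ge (Fintype.card T) 2 with h2 | h2
        · have hpos : 0 < Fintype.card T := Fintype.card_pos_iff.mpr ⟨⟨x0, hx0T⟩⟩
          obtain ⟨zz, hzz⟩ := Fintype.card_eq_one_iff.mp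
            (le_antisymm (Nat.lt_succ_iff.mp h2) hpos)
          have ht1z : (⟨t1, ht1T⟩ : T) = zz := hzz _
          refine ⟨[t1], List.isChain_singleton t1, by simp, rfl, ?_⟩
          intro x
          simp only [List.mem_singleton]
          constructor
          · rintro rfl; exact ht1T
          · intro hx
            have hxz := hzz ⟨x, hx⟩
            rw [← ht1z] at hxz
            exact congrArg Subtype.val hxz
        · obtain ⟨c'', hcyc'', hclen''⟩ := hamCycL hlsT hstrongT h2
          have hallT : ∀ y : T, y ∈ c'' := by
            have huniv : c''.toFinset = Finset.univ := Finset.eq_univ_of_card _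
              (by rw [List.toFinset_card_of_nodup hcyc''.2.1, hclen''])
            intro y
            rw [← List.mem_toFinset, huniv]
            exact Finset.mem_univ y
          obtain ⟨c3, hc3cyc, hc3h, hc3p⟩ := hcyc''.to_head (hallT ⟨t1, ht1T⟩)
          refine ⟨c3.map Subtype.val, (List.isChain_map _).mpr hc3cyc.2.2.1,
            hc3cyc.2.1.map Subtype.val_injective, ?_, ?_⟩
          · rw [List.head?_map, hc3h]; rfl
          · intro x
            constructor
            · intro hx
              obtain ⟨w1, _, rfl⟩ := List.mem_map.mp hx
              exact w1.2
            · intro hx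
              exact List.mem_map.mpr ⟨⟨x, hx⟩, hc3p.mem_iff.mpr (hallT ⟨x, hx⟩), rfl⟩
      refine ⟨pm ++ q, ?_, ?_, ?_⟩
      · refine List.isChain_append.mpr ?_
        refine ⟨hpmc, hqc, ?_⟩
        intro x hx y hy
        rw [huu] at hx
        rw [hqh] at hy
        simp only [Option.mem_def, Option.some.injEq] at hx hy
        subst hx; subst hy
        exact hut1
      · rw [List.nodup_append]
        exact ⟨hpmn, hqn, fun x hx _ hxq hxy => by subst hxy; exact ((hpm_mem _).mp hx) ((hqall _).mp hxq)⟩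
      · intro x
        rcases Classical.em (x ∈ T) with hx | hx
        · exact List.mem_append.mpr (Or.inr ((hqall x).mpr hx))
        · exact List.mem_append.mpr (Or.inl ((hpm_mem x).mpr hx))

end PathMain

section Final
def DigraphConnected' {V : Type*} (A : V → V → Prop) : Prop :=
  ∀ u v : V, Relation.ReflTransGen (fun a b => A a b ∨ A b a) u v

theorem stmt17' {V : Type*} [Fintype V] (A : V → V → Prop)
    (hls : LocallySemicomplete' A) :
    (DigraphConnected' A → ∃ f : Fin (Fintype.card V) ≃ V,
      ∀ i : ℕ, ∀ h : i + 1 < Fintype.card V,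
        A (f ⟨i, Nat.lt_of_succ_lt h⟩) (f ⟨i + 1, h⟩)) ∧
    ((∀ u v : V, Relation.ReflTransGen A u v) → 2 ≤ Fintype.card V →
      ∃ e : ZMod (Fintype.card V) ≃ V, ∀ i, A (e i) (e (i + 1))) := by
  classical
  constructor
  · intro hconn
    obtain ⟨p, hpc, hpn, hpall⟩ := hamPathL (Fintype.card V) A le_rfl hls hconn
    have hplen : p.length = Fintype.card V := by
      refine le_antisymm hpn.length_le_card ?_
      calc Fintype.card V = (Finset.univ : Finset V).card := rfl
        _ ≤ p.toFinset.card := Finset.card_le_card (fun z _ => List.mem_toFinset.mpr (hpall z))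
        _ ≤ p.length := p.toFinset_card_le
    set g : Fin (Fintype.card V) → V := fun i => p.get ⟨i.1, by omega⟩ with hgdef
    have hginj : Function.Injective g := by
      intro i j hij
      have := List.nodup_iff_injective_get.mp hpn hij
      simpa [Fin.ext_iff] using (congrArg Fin.val this)
    have hgbij : Function.Bijective g :=
      (Fintype.bijective_iff_injective_and_card g).mpr ⟨hginj, by simp⟩
    refine ⟨Equiv.ofBijective g hgbij, ?_⟩
    intro i h
    show A (g ⟨i, _⟩) (g ⟨i + 1, h⟩)
    rw [hgdef]
    exact List.isChain_iff_getElem.mp hpc i (by omega)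
  · intro hstrong hcard
    obtain ⟨c, hcyc, hclen⟩ := hamCycL hls hstrong hcard
    haveI : NeZero (Fintype.card V) := ⟨by omega⟩
    haveI : Fact (1 < Fintype.card V) := ⟨by omega⟩
    set g : ZMod (Fintype.card V) → V := fun i => c.get ⟨i.val, by rw [hclen]; exact i.val_lt⟩
      with hgdef
    have hginj : Function.Injective g := by
      intro i j hij
      have := List.nodup_iff_injective_get.mp hcyc.2.1 hij
      have hv : i.val = j.val := by simpa [Fin.ext_iff] using congrArg Fin.val this
      exact ZMod.val_injective _ hv
    have hgbij : Function.Bijective g :=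
      (Fintype.bijective_iff_injective_and_card g).mpr ⟨hginj, by rw [ZMod.card]⟩
    refine ⟨Equiv.ofBijective g hgbij, ?_⟩
    intro i
    show A (g i) (g (i + 1))
    have hval : (i + 1).val = (i.val + 1) % Fintype.card V := by
      rw [ZMod.val_add, ZMod.val_one]
    rcases Nat.lt_or_ge (i.val + 1) (Fintype.card V) with hlt | hge
    · have h1 : (i + 1).val = i.val + 1 := by rw [hval, Nat.mod_eq_of_lt hlt]
      have harc := List.isChain_iff_getElem.mp hcyc.2.2.1 i.val (by omega)
      rw [hgdef]
      simp only
      have : (⟨(i + 1).val, by rw [hclen]; exact (i+1).val_lt⟩ : Fin c.length)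
          = ⟨i.val + 1, by omega⟩ := Fin.ext (by simpa using h1)
      rw [this]
      convert harc using 2 <;> rfl
    · have hie : i.val + 1 = Fintype.card V := by
        have := i.val_lt; omega
      have h1 : (i + 1).val = 0 := by rw [hval, hie, Nat.mod_self]
      have hlen2 : 2 ≤ c.length := hcyc.1
      have hlast : c.getLast? = some (c.get ⟨c.length - 1, by omega⟩) := by
        rw [List.getLast?_eq_getElem?, List.getElem?_eq_getElem (by omega : c.length - 1 < c.length)]
        rfl
      have hhead : c.head? = some (c.get ⟨0, by omega⟩) := by
        rw [List.head?_eq_getElem?, List.getElem?_eq_getElem (by omega : 0 < c.length)]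
        rfl
      have harc := hcyc.2.2.2 _ (by rw [hlast]; rfl) _ (by rw [hhead]; rfl)
      have v1 : c.get ⟨c.length - 1, by omega⟩ = c.get ⟨i.val, by rw [hclen]; exact i.val_lt⟩ :=
        congrArg c.get (Fin.ext (by simp only; rw [hclen]; omega))
      have v2 : c.get ⟨0, by omega⟩ = c.get ⟨(i + 1).val, by rw [hclen]; exact (i+1).val_lt⟩ :=
        congrArg c.get (Fin.ext (by simp only; omega))
      rw [v1, v2] at harc
      exact harc
  
end Final


/-- every connected locally semicomplete digraph has a Hamilton directed
path, and every strong locally semicomplete digraph on at least 2 vertices has a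
Hamilton directed cycle. -/
theorem stmt17 {V : Type*} [Fintype V] (A : V → V → Prop)
    (hls : LocallySemicomplete A) :
    (DigraphConnected A → ∃ f : Fin (Fintype.card V) ≃ V,
      ∀ i : ℕ, ∀ h : i + 1 < Fintype.card V,
        A (f ⟨i, Nat.lt_of_succ_lt h⟩) (f ⟨i + 1, h⟩)) ∧
    (DigraphStrong A → 2 ≤ Fintype.card V →
      ∃ e : ZMod (Fintype.card V) ≃ V, ∀ i, A (e i) (e (i + 1))) := by
  have h := stmt17' A hls
  exact ⟨fun hc => h.1 hc, fun hs => h.2 hs⟩
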